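/- Let C₁,…,C_m be the clauses of a CNF formula over variables x₁,…,xₙ. Define the Kripke structure W=(S,R,π) over atomic propositions p₁,…,pₙ by: S={s_i | i≤m} ∪ {r_i^j, r̄_i^j | i≤m, j≤n}; R contains (s_i,r_i^1) always and (s_i,r̄_i^1) iff x₁ does not occur in C_i; for 1≤j≤n−1, R contains (r_i^j,r_i^{j+1}) always, (r_i^j,r̄_i^{j+1}) iff x_{j+1} does not occur in C_i, (r̄_i^j,r_i^{j+1}) iff x_j does not occur in C_i but x_{j+1} does, and (r̄_i^j,r̄_i^{j+1}) iff neither x_j nor x_{j+1} occurs in C_i; π(s_i)=π(r̄_i^j)=∅, and π(r_i^j)={p_j} if x_j occurs positively in C_i or does not occur in C_i, π(r_i^j)=∅ if x_j occurs negatively in C_i. Then the CNF formula C₁∧…∧C_m is satisfiable if and only if W,{s₁,…,s_m} ⊨ ⋁_{j=1}^{n} □^j dep(;p_j), where □^j denotes j nested □ operators and dep(;p_j) the 0-ary dependence atom. -/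

import Mathlib

/-- Syntax of modal dependence logic (MDL) over atomic propositions `AP`. -/
inductive MDL (AP : Type) : Type where
  | top   : MDL AP                       -- ⊤
  | bot   : MDL AP                       -- ⊥
  | atom  : AP → MDL AP                  -- p
  | natom : AP → MDL AP                  -- ¬p
  | dep   : List AP → AP → MDL AP        -- dep(p₁,…,pₙ;q)
  | ndep  : List AP → AP → MDL AP        -- ¬dep(p₁,…,pₙ;q)
  | and   : MDL AP → MDL AP → MDL AP     -- ∧
  | dor   : MDL AP → MDL AP → MDL AP     -- dependence disjunction ∨
  | cor   : MDL AP → MDL AP → MDL AP     -- classical disjunction ⊻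
  | box   : MDL AP → MDL AP              -- □
  | dia   : MDL AP → MDL AP              -- ◇

/-- Team semantics of MDL over a Kripke structure `(S, R, π)`. -/
def MDL.sat {S AP : Type} (R : S → S → Prop) (π : S → Set AP) :
    MDL AP → Set S → Prop
  | .top, _ => True
  | .bot, T => T = ∅
  | .atom p, T => ∀ s ∈ T, p ∈ π s
  | .natom p, T => ∀ s ∈ T, p ∉ π s
  | .dep ps q, T => ∀ s₁ ∈ T, ∀ s₂ ∈ T,
      (∀ p ∈ ps, (p ∈ π s₁ ↔ p ∈ π s₂)) → (q ∈ π s₁ ↔ q ∈ π s₂)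
  | .ndep _ _, T => T = ∅
  | .and φ ψ, T => MDL.sat R π φ T ∧ MDL.sat R π ψ T
  | .dor φ ψ, T => ∃ T₁ T₂ : Set S, T = T₁ ∪ T₂ ∧ MDL.sat R π φ T₁ ∧ MDL.sat R π ψ T₂
  | .cor φ ψ, T => MDL.sat R π φ T ∨ MDL.sat R π ψ T
  | .box φ, T => MDL.sat R π φ {s' | ∃ s ∈ T, R s s'}
  | .dia φ, T => ∃ T' : Set S, MDL.sat R π φ T' ∧ ∀ s ∈ T, ∃ s' ∈ T', R s s'

/-- Big dependence disjunction ⋁ of a list of formulas (empty disjunction is ⊥). -/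
def MDL.bigDor {AP : Type} : List (MDL AP) → MDL AP
  | [] => .bot
  | [φ] => φ
  | φ :: ψ :: rest => .dor φ (MDL.bigDor (ψ :: rest))

/-- Big conjunction ⋀ of a list of formulas (empty conjunction is ⊤). -/
def MDL.bigAnd {AP : Type} : List (MDL AP) → MDL AP
  | [] => .top
  | [φ] => φ
  | φ :: ψ :: rest => .and φ (MDL.bigAnd (ψ :: rest))

/-- `◇^k φ` : `k` nested ◇ operators. -/
def MDL.diaIter {AP : Type} : ℕ → MDL AP → MDL AP
  | 0, φ => φ
  | n + 1, φ => .dia (MDL.diaIter n φ)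

/-- `□^k φ` : `k` nested □ operators. -/
def MDL.boxIter {AP : Type} : ℕ → MDL AP → MDL AP
  | 0, φ => φ
  | n + 1, φ => .box (MDL.boxIter n φ)

/-- A CNF formula with `m` clauses over `n` variables: `C i j = some true` iff
variable `x_j` occurs positively in clause `C_i`, `some false` iff it occurs
negatively, `none` iff it does not occur (each variable occurs at most once
per clause). -/
def CNF.Satisfiable {m n : ℕ} (C : Fin m → Fin n → Option Bool) : Prop :=
  ∃ θ : Fin n → Bool, ∀ i : Fin m, ∃ j : Fin n, C i j = some (θ j)


namespace Stmt2Aux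

abbrev Wld (m n : ℕ) : Type := Fin m ⊕ (Fin m × Fin n × Bool)

variable {m n : ℕ}

def Rkr (C : Fin m → Fin n → Option Bool) : Wld m n → Wld m n → Prop := fun s s' =>
  match s, s' with
  | Sum.inl i, Sum.inr (i', j, b) =>
      i = i' ∧ (j : ℕ) = 0 ∧ (b = true ∨ (b = false ∧ C i j = none))
  | Sum.inr (i, j, b), Sum.inr (i', j', b') =>
      i = i' ∧ (j' : ℕ) = (j : ℕ) + 1 ∧
      ((b = true ∧ b' = true) ∨
       (b = true ∧ b' = false ∧ C i j' = none) ∨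
       (b = false ∧ b' = true ∧ C i j = none ∧ C i j' ≠ none) ∨
       (b = false ∧ b' = false ∧ C i j = none ∧ C i j' = none))
  | Sum.inl _, Sum.inl _ => False
  | Sum.inr _, Sum.inl _ => False

def pkr (C : Fin m → Fin n → Option Bool) : Wld m n → Set (Fin n) := fun s =>
  {p : Fin n |
    match s with
    | Sum.inr (i, j, true) => p = j ∧ C i j ≠ some false
    | Sum.inl _ => False
    | Sum.inr (_, _, false) => False}

variable {C : Fin m → Fin n → Option Bool}

lemma Rkr_inl_inl (i i' : Fin m) : ¬ Rkr C (Sum.inl i) (Sum.inl i') := fun h => h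

lemma Rkr_inr_inl (w : Fin m × Fin n × Bool) (i' : Fin m) :
    ¬ Rkr C (Sum.inr w) (Sum.inl i') := fun h => h

lemma Rkr_inl_inr (i i' : Fin m) (j : Fin n) (b : Bool) :
    Rkr C (Sum.inl i) (Sum.inr (i', j, b)) ↔
      (i = i' ∧ (j : ℕ) = 0 ∧ (b = true ∨ (b = false ∧ C i j = none))) := Iff.rfl

lemma Rkr_inr_inr (i i' : Fin m) (j j' : Fin n) (b b' : Bool) :
    Rkr C (Sum.inr (i, j, b)) (Sum.inr (i', j', b')) ↔
      (i = i' ∧ (j' : ℕ) = (j : ℕ) + 1 ∧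
      ((b = true ∧ b' = true) ∨
       (b = true ∧ b' = false ∧ C i j' = none) ∨
       (b = false ∧ b' = true ∧ C i j = none ∧ C i j' ≠ none) ∨
       (b = false ∧ b' = false ∧ C i j = none ∧ C i j' = none))) := Iff.rfl

lemma pkr_inr_true (p : Fin n) (i : Fin m) (j : Fin n) :
    p ∈ pkr C (Sum.inr (i, j, true)) ↔ (p = j ∧ C i j ≠ some false) := Iff.rfl

lemma pkr_inr_false (p : Fin n) (i : Fin m) (j : Fin n) :
    ¬ p ∈ pkr C (Sum.inr (i, j, false)) := fun h => h

lemma sat_boxIter {S AP : Type} (R : S → S → Prop) (π : S → Set AP) (φ : MDL AP) :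
    ∀ (k : ℕ) (T : Set S),
      MDL.sat R π (MDL.boxIter k φ) T ↔
        MDL.sat R π φ ((fun T => {s' | ∃ s ∈ T, R s s'})^[k] T)
  | 0, T => Iff.rfl
  | k+1, T => by
      show MDL.sat R π (MDL.boxIter k φ) {s' | ∃ s ∈ T, R s s'} ↔ _
      rw [sat_boxIter R π φ k, Function.iterate_succ_apply]

lemma img_iter (C : Fin m → Fin n → Option Bool) (I : Set (Fin m)) :
    ∀ k : ℕ, k < n →
      (fun T => {s' | ∃ s ∈ T, Rkr C s s'})^[k+1] (Sum.inl '' I) =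
        {s : Wld m n | ∃ i ∈ I, ∃ j : Fin n, (j : ℕ) = k ∧
          (s = Sum.inr (i, j, true) ∨ (s = Sum.inr (i, j, false) ∧ C i j = none))}
  | 0, hk => by
      rw [Function.iterate_one]
      ext s
      simp only [Set.mem_setOf_eq, Set.mem_image]
      constructor
      · rintro ⟨t, ⟨i, hi, rfl⟩, hR⟩
        rcases s with i'' | ⟨i', j, b⟩
        · exact (Rkr_inl_inl _ _ hR).elim
        · rw [Rkr_inl_inr] at hR
          obtain ⟨rfl, hj, hb⟩ := hR
          refine ⟨i, hi, j, hj, ?_⟩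
          rcases hb with rfl | ⟨rfl, hnone⟩
          · exact Or.inl rfl
          · exact Or.inr ⟨rfl, hnone⟩
      · rintro ⟨i, hi, j, hj, hs⟩
        rcases hs with rfl | ⟨rfl, hnone⟩
        · exact ⟨Sum.inl i, ⟨i, hi, rfl⟩, (Rkr_inl_inr ..).mpr ⟨rfl, hj, Or.inl rfl⟩⟩
        · exact ⟨Sum.inl i, ⟨i, hi, rfl⟩,
            (Rkr_inl_inr ..).mpr ⟨rfl, hj, Or.inr ⟨rfl, hnone⟩⟩⟩
  | k+1, hk => by
      rw [Function.iterate_succ_apply', img_iter C I k (by omega)]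
      ext s
      simp only [Set.mem_setOf_eq]
      constructor
      · rintro ⟨t, ⟨i, hi, j, hj, ht⟩, hR⟩
        rcases s with i'' | ⟨i', j', b'⟩
        · rcases ht with rfl | ⟨rfl, _⟩ <;> exact (Rkr_inr_inl _ _ hR).elim
        · rcases ht with rfl | ⟨rfl, hnone⟩
          · rw [Rkr_inr_inr] at hR
            obtain ⟨rfl, hj', hb⟩ := hR
            refine ⟨i, hi, j', by omega, ?_⟩
            rcases hb with ⟨_, rfl⟩ | ⟨_, rfl, hn⟩ | ⟨hne, _⟩ | ⟨hne, _⟩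
            · exact Or.inl rfl
            · exact Or.inr ⟨rfl, hn⟩
            · exact absurd hne (by simp)
            · exact absurd hne (by simp)
          · rw [Rkr_inr_inr] at hR
            obtain ⟨rfl, hj', hb⟩ := hR
            refine ⟨i, hi, j', by omega, ?_⟩
            rcases hb with ⟨hne, _⟩ | ⟨hne, _⟩ | ⟨_, rfl, _, _⟩ | ⟨_, rfl, _, hn⟩
            · exact absurd hne (by simp)
            · exact absurd hne (by simp)
            · exact Or.inl rfl
            · exact Or.inr ⟨rfl, hn⟩
      · rintro ⟨i, hi, j', hj', hs⟩
        have hkn : k < n := by omega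
        rcases hs with rfl | ⟨rfl, hn⟩
        · exact ⟨Sum.inr (i, ⟨k, hkn⟩, true), ⟨i, hi, ⟨k, hkn⟩, rfl, Or.inl rfl⟩,
            (Rkr_inr_inr ..).mpr ⟨rfl, hj', Or.inl ⟨rfl, rfl⟩⟩⟩
        · exact ⟨Sum.inr (i, ⟨k, hkn⟩, true), ⟨i, hi, ⟨k, hkn⟩, rfl, Or.inl rfl⟩,
            (Rkr_inr_inr ..).mpr ⟨rfl, hj', Or.inr (Or.inl ⟨rfl, rfl, hn⟩)⟩⟩

lemma dep_level (C : Fin m → Fin n → Option Bool) (I : Set (Fin m)) (j : Fin n) :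
    MDL.sat (Rkr C) (pkr C) (MDL.dep [] j)
      {s : Wld m n | ∃ i ∈ I, ∃ j' : Fin n, (j' : ℕ) = (j : ℕ) ∧
        (s = Sum.inr (i, j', true) ∨ (s = Sum.inr (i, j', false) ∧ C i j' = none))}
      ↔ ∃ b, ∀ i ∈ I, C i j = some b := by
  show (∀ s₁ ∈ _, ∀ s₂ ∈ _, _ → _) ↔ _
  constructor
  · intro H
    have hnone : ∀ i ∈ I, C i j ≠ none := by
      intro i hi hC
      have h1 : (Sum.inr (i, j, true) : Wld m n) ∈
          {s : Wld m n | ∃ i ∈ I, ∃ j' : Fin n, (j' : ℕ) = (j : ℕ) ∧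
            (s = Sum.inr (i, j', true) ∨ (s = Sum.inr (i, j', false) ∧ C i j' = none))} :=
        ⟨i, hi, j, rfl, Or.inl rfl⟩
      have h2 : (Sum.inr (i, j, false) : Wld m n) ∈
          {s : Wld m n | ∃ i ∈ I, ∃ j' : Fin n, (j' : ℕ) = (j : ℕ) ∧
            (s = Sum.inr (i, j', true) ∨ (s = Sum.inr (i, j', false) ∧ C i j' = none))} :=
        ⟨i, hi, j, rfl, Or.inr ⟨rfl, hC⟩⟩
      have h3 := H _ h1 _ h2 (by simp)
      exact pkr_inr_false j i j (h3.mp ((pkr_inr_true ..).mpr ⟨rfl, by simp [hC]⟩))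
    by_cases hT : ∃ i ∈ I, C i j = some true
    · obtain ⟨i₀, hi₀, h₀⟩ := hT
      refine ⟨true, fun i hi => ?_⟩
      have h3 := H (Sum.inr (i, j, true)) ⟨i, hi, j, rfl, Or.inl rfl⟩
        (Sum.inr (i₀, j, true)) ⟨i₀, hi₀, j, rfl, Or.inl rfl⟩ (by simp)
      have h4 : C i j ≠ some false :=
        ((pkr_inr_true ..).mp (h3.mpr ((pkr_inr_true ..).mpr ⟨rfl, by simp [h₀]⟩))).2
      rcases hC : C i j with _ | b
      · exact absurd hC (hnone i hi)
      · cases b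
        · exact absurd hC h4
        · rfl
    · refine ⟨false, fun i hi => ?_⟩
      rcases hC : C i j with _ | b
      · exact absurd hC (hnone i hi)
      · cases b
        · rfl
        · exact absurd ⟨i, hi, hC⟩ hT
  · rintro ⟨b, hb⟩ s₁ hs₁ s₂ hs₂ -
    obtain ⟨i₁, hi₁, j₁, hj₁, hs₁⟩ := hs₁
    obtain ⟨i₂, hi₂, j₂, hj₂, hs₂⟩ := hs₂
    have e₁ : j₁ = j := Fin.ext hj₁
    have e₂ : j₂ = j := Fin.ext hj₂
    subst e₁; subst e₂
    rcases hs₁ with rfl | ⟨rfl, hn⟩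
    · rcases hs₂ with rfl | ⟨rfl, hn⟩
      · rw [pkr_inr_true, pkr_inr_true, hb i₁ hi₁, hb i₂ hi₂]
      · exact absurd hn (by simp [hb i₂ hi₂])
    · exact absurd hn (by simp [hb i₁ hi₁])

lemma sat_level (C : Fin m → Fin n → Option Bool) (I : Set (Fin m)) (j : Fin n) :
    MDL.sat (Rkr C) (pkr C) (MDL.boxIter ((j : ℕ) + 1) (MDL.dep [] j)) (Sum.inl '' I) ↔
      ∃ b, ∀ i ∈ I, C i j = some b := by
  rw [sat_boxIter (Rkr C) (pkr C) (MDL.dep [] j) ((j : ℕ) + 1) (Sum.inl '' I),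
    img_iter C I (j : ℕ) j.isLt]
  exact dep_level C I j

lemma sat_bigDor_cons {S AP : Type} (R : S → S → Prop) (π : S → Set AP)
    (φ : MDL AP) (L : List (MDL AP)) (T : Set S) :
    MDL.sat R π (MDL.bigDor (φ :: L)) T ↔
      ∃ T₁ T₂ : Set S, T = T₁ ∪ T₂ ∧ MDL.sat R π φ T₁ ∧
        MDL.sat R π (MDL.bigDor L) T₂ := by
  cases L with
  | nil =>
      show MDL.sat R π φ T ↔ _
      constructor
      · intro h; exact ⟨T, ∅, by simp, h, rfl⟩
      · rintro ⟨T₁, T₂, rfl, h1, h2⟩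
        have h2' : T₂ = ∅ := h2
        rw [h2', Set.union_empty]
        exact h1
  | cons ψ rest => exact Iff.rfl

lemma sat_bigDor_map {S AP ι : Type} [DecidableEq ι] (R : S → S → Prop) (π : S → Set AP)
    (g : ι → MDL AP) :
    ∀ (l : List ι), l.Nodup → ∀ (T : Set S),
      (MDL.sat R π (MDL.bigDor (l.map g)) T ↔
        ∃ f : ι → Set S, T = (⋃ i ∈ l, f i) ∧ ∀ i ∈ l, MDL.sat R π (g i) (f i))
  | [], _, T => by
      show T = ∅ ↔ _
      constructor
      · intro h; exact ⟨fun _ => ∅, by simp [h], by simp⟩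
      · rintro ⟨f, rfl, -⟩; simp
  | a :: l, hnd, T => by
      have ha : a ∉ l := (List.nodup_cons.mp hnd).1
      have hnd' : l.Nodup := (List.nodup_cons.mp hnd).2
      rw [List.map_cons, sat_bigDor_cons]
      constructor
      · rintro ⟨T₁, T₂, rfl, h1, h2⟩
        obtain ⟨f, rfl, hf⟩ := (sat_bigDor_map R π g l hnd' T₂).mp h2
        refine ⟨Function.update f a T₁, ?_, ?_⟩
        · ext x
          simp only [Set.mem_union, Set.mem_iUnion, List.mem_cons]
          constructor
          · rintro (hx | hx)
            · exact ⟨a, Or.inl rfl, by rwa [Function.update_self]⟩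
            · obtain ⟨i, hi, hx⟩ := hx
              have hne : i ≠ a := fun h => ha (h ▸ hi)
              exact ⟨i, Or.inr hi, by rwa [Function.update_of_ne hne]⟩
          · rintro ⟨i, rfl | hi, hx⟩
            · exact Or.inl (by rwa [Function.update_self] at hx)
            · have hne : i ≠ a := fun h => ha (h ▸ hi)
              exact Or.inr ⟨i, hi, by rwa [Function.update_of_ne hne] at hx⟩
        · intro i hi
          rcases List.mem_cons.mp hi with rfl | hi
          · rwa [Function.update_self]
          · have hne : i ≠ a := fun h => ha (h ▸ hi)
            rw [Function.update_of_ne hne]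
            exact hf i hi
      · rintro ⟨f, rfl, hf⟩
        refine ⟨f a, ⋃ i ∈ l, f i, ?_, hf a List.mem_cons_self,
          (sat_bigDor_map R π g l hnd' _).mpr ⟨f, rfl, fun i hi => hf i (List.mem_cons_of_mem a hi)⟩⟩
        ext x
        simp only [Set.mem_union, Set.mem_iUnion, List.mem_cons]
        constructor
        · rintro ⟨i, rfl | hi, hx⟩
          · exact Or.inl hx
          · exact Or.inr ⟨i, hi, hx⟩
        · rintro (hx | ⟨i, hi, hx⟩)
          · exact ⟨a, Or.inl rfl, hx⟩
          · exact ⟨i, Or.inr hi, hx⟩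

end Stmt2Aux
/-- Reduction of CNF satisfiability to MDL model checking for
the fragment {□, ∨, dep}.  Worlds: `Sum.inl i = s_i` and
`Sum.inr (i, j, true) = r_i^{j+1}`, `Sum.inr (i, j, false) = r̄_i^{j+1}`
(`j : Fin n` is the 0-based level, so level `j` here is level `j+1` of the
informal statement); atomic propositions: `j = p_{j+1}`.
`R` contains `(s_i, r_i^1)` always and `(s_i, r̄_i^1)` iff `x₁` does not occur
in `C_i`; it contains `(r_i^j, r_i^{j+1})` always, `(r_i^j, r̄_i^{j+1})` iff
`x_{j+1}` does not occur in `C_i`, `(r̄_i^j, r_i^{j+1})` iff `x_j` does not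
occur in `C_i` but `x_{j+1}` does, and `(r̄_i^j, r̄_i^{j+1})` iff neither
occurs.  `π(s_i) = π(r̄_i^j) = ∅`; `π(r_i^j) = {p_j}` iff `x_j` occurs
positively in `C_i` or does not occur at all, and `= ∅` iff `x_j` occurs
negatively.  Then `C₁ ∧ … ∧ C_m` is satisfiable iff
`W, {s₁,…,s_m} ⊨ ⋁_{j=1}^n □^j dep(;p_j)`. -/
theorem stmt2 (m n : ℕ) (C : Fin m → Fin n → Option Bool) :
    CNF.Satisfiable C ↔
      MDL.sat (S := Fin m ⊕ (Fin m × Fin n × Bool))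
        (fun s s' =>
          match s, s' with
          | Sum.inl i, Sum.inr (i', j, b) =>
              i = i' ∧ (j : ℕ) = 0 ∧ (b = true ∨ (b = false ∧ C i j = none))
          | Sum.inr (i, j, b), Sum.inr (i', j', b') =>
              i = i' ∧ (j' : ℕ) = (j : ℕ) + 1 ∧
              ((b = true ∧ b' = true) ∨
               (b = true ∧ b' = false ∧ C i j' = none) ∨
               (b = false ∧ b' = true ∧ C i j = none ∧ C i j' ≠ none) ∨
               (b = false ∧ b' = false ∧ C i j = none ∧ C i j' = none))
          | _, _ => False)
        (fun s => {p : Fin n |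
          match s with
          | Sum.inr (i, j, true) => p = j ∧ C i j ≠ some false
          | _ => False})
        (MDL.bigDor ((List.finRange n).map fun j : Fin n =>
          MDL.boxIter ((j : ℕ) + 1) (MDL.dep [] j)))
        (Set.range Sum.inl) := by
  suffices H : CNF.Satisfiable C ↔
    MDL.sat (Stmt2Aux.Rkr C) (Stmt2Aux.pkr C)
      (MDL.bigDor ((List.finRange n).map fun j : Fin n =>
        MDL.boxIter ((j : ℕ) + 1) (MDL.dep [] j)))
      (Set.range Sum.inl) by
    convert H using 2
    · funext s s'
      rcases s with _ | ⟨_, _, _ | _⟩ <;> rcases s' with _ | ⟨_, _, _ | _⟩ <;> rfl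
    · funext s
      rcases s with _ | ⟨_, _, _ | _⟩ <;> rfl
  rw [Stmt2Aux.sat_bigDor_map (Stmt2Aux.Rkr C) (Stmt2Aux.pkr C)
    (fun j : Fin n => MDL.boxIter ((j : ℕ) + 1) (MDL.dep [] j))
    (List.finRange n) (List.nodup_finRange n)]
  simp only [List.mem_finRange, Set.iUnion_true, forall_const, true_implies, true_and]
  constructor
  · rintro ⟨θ, hθ⟩
    refine ⟨fun j => Sum.inl '' {i | C i j = some (θ j)}, ?_, fun j => ?_⟩
    · ext s
      constructor
      · rintro ⟨i, rfl⟩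
        obtain ⟨j, hj⟩ := hθ i
        exact Set.mem_iUnion.mpr ⟨j, ⟨i, hj, rfl⟩⟩
      · intro hs
        obtain ⟨j, hj⟩ := Set.mem_iUnion.mp hs
        obtain ⟨i, -, rfl⟩ := hj
        exact ⟨i, rfl⟩
    · exact (Stmt2Aux.sat_level C _ j).mpr ⟨θ j, fun i hi => hi⟩
  · rintro ⟨f, hT, hf⟩
    have hsub : ∀ j, f j ⊆ Set.range (Sum.inl :
        Fin m → Fin m ⊕ (Fin m × Fin n × Bool)) := by
      intro j
      rw [hT]
      exact Set.subset_iUnion f j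
    have key : ∀ j : Fin n, ∃ b, ∀ i, Sum.inl i ∈ f j → C i j = some b := by
      intro j
      have him : Sum.inl '' (Sum.inl ⁻¹' f j) = f j :=
        Set.image_preimage_eq_of_subset (hsub j)
      have h := hf j
      rw [← him, Stmt2Aux.sat_level C _ j] at h
      exact h
    choose b hb using key
    refine ⟨b, fun i => ?_⟩
    have hi : Sum.inl i ∈ ⋃ j, f j := hT ▸ Set.mem_range_self i
    obtain ⟨j, hj⟩ := Set.mem_iUnion.mp hi
    exact ⟨j, hb j i hj⟩
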